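/- The function F_p(z,w) = |Re(z−w)| / √(Im(z)·Im(w)) on the upper half-plane is invariant under the Möbius action of SL_2(ℝ) restricted to elements mapping the upper half-plane to itself, where z, w are treated as dual numbers; equivalently, for real a,b,c,d with ad−bc=1 and points (u,v), (u',v') with v,v'>0, the quantity |u−u'|/√(vv') is preserved under the dual-number Möbius map (u+εv) ↦ ((a(u+εv)+b)/(c(u+εv)+d)) with ε² = 0. -/

import Mathlib

/-- The quantity `|u−u'|/√(v v')` on the dual-number upper half-plane is invariant
under the Möbius action `u+εv ↦ (au+b)/(cu+d) + ε·v/(cu+d)²` of SL₂(ℝ)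
(defined when `cu+d ≠ 0`). -/
theorem parabolic_F_invariant_dual (a b c d : ℝ) (h : a * d - b * c = 1)
    (u₁ v₁ u₂ v₂ : ℝ) (hv₁ : 0 < v₁) (hv₂ : 0 < v₂)
    (h₁ : c * u₁ + d ≠ 0) (h₂ : c * u₂ + d ≠ 0) :
    |(a * u₁ + b) / (c * u₁ + d) - (a * u₂ + b) / (c * u₂ + d)| /
      Real.sqrt ((v₁ / (c * u₁ + d)^2) * (v₂ / (c * u₂ + d)^2))
    = |u₁ - u₂| / Real.sqrt (v₁ * v₂) := by
  have hnum : (a * u₁ + b) / (c * u₁ + d) - (a * u₂ + b) / (c * u₂ + d)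
      = (u₁ - u₂) / ((c * u₁ + d) * (c * u₂ + d)) := by
    rw [div_sub_div _ _ h₁ h₂]
    congr 1
    linear_combination (u₁ - u₂) * h
  have hsqrt : Real.sqrt ((v₁ / (c * u₁ + d)^2) * (v₂ / (c * u₂ + d)^2))
      = Real.sqrt (v₁ * v₂) / |(c * u₁ + d) * (c * u₂ + d)| := by
    rw [show (v₁ / (c * u₁ + d)^2) * (v₂ / (c * u₂ + d)^2)
        = (v₁ * v₂) / ((c * u₁ + d) * (c * u₂ + d))^2 by rw [div_mul_div_comm, ← mul_pow],
      Real.sqrt_div (by positivity), Real.sqrt_sq_eq_abs]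
  rw [hnum, hsqrt, abs_div]
  have hmul : (c * u₁ + d) * (c * u₂ + d) ≠ 0 := mul_ne_zero h₁ h₂
  have habs : |(c * u₁ + d) * (c * u₂ + d)| ≠ 0 := abs_ne_zero.mpr hmul
  field_simp
  exact mul_div_cancel_right₀ _ (abs_ne_zero.mpr (by rw [mul_comm u₁ c, mul_comm u₂ c]; exact hmul))
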